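/- For every r ∈ (0,1) and every integer N ≥ 1, the Shannon entropy of the truncated geometric distribution has the closed form H(P_{N,r}) = log((1 - r^N)/(1-r)) - (r/(1-r)) · ((1 - N r^{N-1} + (N-1) r^N)/(1 - r^N)) · log r. -/
import Mathlib

lemma sum_id_mul_geom (r : ℝ) (N : ℕ) :
    (∑ Δ ∈ Finset.range N, (Δ : ℝ) * r ^ Δ) * (1 - r) ^ 2 =
      r - (N : ℝ) * r ^ N + ((N : ℝ) - 1) * r ^ (N + 1) := by
  induction N with
  | zero => simp
  | succ n ih =>
    rw [Finset.sum_range_succ, add_mul, ih]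
    push_cast
    ring

/-- Closed form for the Shannon entropy of the truncated geometric
distribution `P_{N,r}(Δ) = (1-r) r^Δ / (1 - r^N)` on `{0,…,N-1}`:
`H(P_{N,r}) = log((1 - r^N)/(1-r)) - (r/(1-r)) · ((1 - N r^{N-1} + (N-1) r^N)/(1 - r^N)) · log r`. -/
theorem truncGeom_entropy_closedForm (r : ℝ) (hr : r ∈ Set.Ioo (0 : ℝ) 1)
    (N : ℕ) (hN : 1 ≤ N) :
    -∑ Δ ∈ Finset.range N,
        ((1 - r) * r ^ Δ / (1 - r ^ N)) * Real.log ((1 - r) * r ^ Δ / (1 - r ^ N)) =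
      Real.log ((1 - r ^ N) / (1 - r)) -
        (r / (1 - r)) *
          ((1 - (N : ℝ) * r ^ (N - 1) + ((N : ℝ) - 1) * r ^ N) / (1 - r ^ N)) *
          Real.log r := by
  obtain ⟨hr0, hr1⟩ := hr
  obtain ⟨M, rfl⟩ : ∃ M, N = M + 1 := ⟨N - 1, (Nat.succ_pred_eq_of_pos hN).symm⟩
  set N := M + 1 with hNdef
  have h1r : (0 : ℝ) < 1 - r := by linarith
  have hq : (0 : ℝ) < 1 - r ^ N := by
    have : r ^ N < 1 := pow_lt_one₀ hr0.le hr1 (by omega)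
    linarith
  have hrpow : ∀ Δ : ℕ, (0 : ℝ) < r ^ Δ := fun Δ => pow_pos hr0 Δ
  have key : ∀ Δ ∈ Finset.range N,
      ((1 - r) * r ^ Δ / (1 - r ^ N)) * Real.log ((1 - r) * r ^ Δ / (1 - r ^ N)) =
        ((1 - r) / (1 - r ^ N) * (Real.log (1 - r) - Real.log (1 - r ^ N))) * r ^ Δ +
        ((1 - r) / (1 - r ^ N) * Real.log r) * ((Δ : ℝ) * r ^ Δ) := by
    intro Δ _
    rw [Real.log_div (by positivity) (by positivity),
        Real.log_mul (by positivity) (by positivity), Real.log_pow]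
    ring
  rw [Finset.sum_congr rfl key, Finset.sum_add_distrib, ← Finset.mul_sum, ← Finset.mul_sum]
  have hgeom : ∑ Δ ∈ Finset.range N, r ^ Δ = (1 - r ^ N) / (1 - r) := by
    have h : r - 1 ≠ 0 := by linarith
    rw [geom_sum_eq (ne_of_lt hr1)]
    field_simp
    ring
  have hT := sum_id_mul_geom r N
  set T := ∑ Δ ∈ Finset.range N, (Δ : ℝ) * r ^ Δ
  rw [hgeom, Real.log_div (by positivity) (by positivity)]
  have hN1 : N - 1 = M := by omega
  have hpow1 : r ^ N = r * r ^ M := by rw [hNdef, pow_succ]; ring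
  have hpow2 : r ^ (N + 1) = r ^ 2 * r ^ M := by rw [hNdef]; ring
  rw [hpow1, hpow2] at hT
  have hTval : T = (r - (N : ℝ) * (r * r ^ M) + ((N : ℝ) - 1) * (r ^ 2 * r ^ M)) / (1 - r) ^ 2 := by
    rw [eq_div_iff (by positivity)]; exact hT
  rw [hN1, hpow1, hTval]
  have hq' : (1 : ℝ) - r * r ^ M ≠ 0 := by rw [← hpow1]; positivity
  field_simp
  ring
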